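/- Let A be a topological abelian group, let X and Y be locally compact Hausdorff spaces, let φ : X → Y be a local homeomorphism, and let f ∈ C_c(X, A). Then: (i) for every y ∈ Y the set φ⁻¹({y}) ∩ supp(f) is finite, so the fibrewise sum (φ_* f)(y) := ∑_{x ∈ φ⁻¹({y})} f(x) has only finitely many nonzero terms; (ii) φ_* f : Y → A is continuous; (iii) supp(φ_* f) ⊆ φ(supp(f)); (iv) φ_* f ∈ C_c(Y, A). (Well-definedness part of Proposition 2.1.2 and Definition 2.1.1.) -/

import Mathlib

open Set Function

/-- The pushforward of a function `f : X → A` along `φ : X → Y`, defined by summing over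
the fibres: `(pushforward φ f) y = ∑_{x ∈ φ⁻¹({y})} f x` (a `finsum`, which is `0` if the
family is not finitely supported). -/
noncomputable def pushforward {X Y A : Type*} [AddCommMonoid A] (φ : X → Y) (f : X → A) :
    Y → A :=
  fun y => ∑ᶠ x ∈ φ ⁻¹' {y}, f x

/-- Well-definedness part of **Proposition 2.1.2** (and Definition 2.1.1): if `A` is a
topological abelian group, `X`, `Y` are locally compact Hausdorff, `φ : X → Y` is a local
homeomorphism and `f : X → A` is continuous with compact support, then
(i) each fibre meets the support of `f` in a finite set;
(ii) `φ_* f` is continuous;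
(iii) `supp (φ_* f) ⊆ φ '' supp f`;
(iv) `φ_* f` has compact support. -/
theorem pushforward_wellDefined {X Y A : Type*} [TopologicalSpace X] [TopologicalSpace Y]
    [LocallyCompactSpace X] [T2Space X] [LocallyCompactSpace Y] [T2Space Y]
    [AddCommGroup A] [TopologicalSpace A] [IsTopologicalAddGroup A]
    (φ : X → Y) (hφ : IsLocalHomeomorph φ) (f : X → A)
    (hf : Continuous f) (hsupp : HasCompactSupport f) :
    (∀ y : Y, (φ ⁻¹' {y} ∩ tsupport f).Finite) ∧
    Continuous (pushforward φ f) ∧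
    tsupport (pushforward φ f) ⊆ φ '' tsupport f ∧
    HasCompactSupport (pushforward φ f) := by
  set K := tsupport f with hK
  have hKc : IsCompact K := hsupp
  have hcont : Continuous φ := hφ.continuous
  have hopen : IsOpenMap φ := hφ.isOpenMap
  -- choose charts
  choose e hes hfe using hφ
  have hfiber : ∀ x x', x' ∈ (e x).source → φ x' = φ x → x' = x := by
    intro x x' hx' hxx'
    refine (e x).injOn hx' (hes x) ?_
    have h1 : (e x) x' = φ x' := by rw [hfe x]
    have h2 : (e x) x = φ x := by rw [hfe x]
    rw [h1, h2, hxx']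
  -- (i) fibre finiteness
  have fin : ∀ y : Y, (φ ⁻¹' {y} ∩ K).Finite := by
    intro y
    have hco : IsCompact (φ ⁻¹' {y} ∩ K) :=
      hKc.inter_left (isClosed_singleton.preimage hcont)
    have hcov : (φ ⁻¹' {y} ∩ K) ⊆ ⋃ x : ↥(φ ⁻¹' {y} ∩ K), (e x.1).source := by
      intro z hz
      exact mem_iUnion.2 ⟨⟨z, hz⟩, hes z⟩
    obtain ⟨t, ht⟩ := hco.elim_finite_subcover (fun x : ↥(φ ⁻¹' {y} ∩ K) => (e x.1).source)
      (fun x => (e x.1).open_source) hcov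
    have hsub : (φ ⁻¹' {y} ∩ K) ⊆ Subtype.val '' (t : Set (φ ⁻¹' {y} ∩ K : Set X)) := by
      intro z hz
      obtain ⟨i, hi, hzi⟩ := mem_iUnion₂.1 (ht hz)
      have : z = i.1 := by
        refine hfiber i.1 z hzi ?_
        have h1 : φ z = y := hz.1
        have h2 : φ i.1 = y := i.2.1
        rw [h1, h2]
      exact ⟨i, hi, this.symm⟩
    exact ((t.finite_toSet).image _).subset hsub
  -- support inclusion
  have hsubK : tsupport (pushforward φ f) ⊆ φ '' K := by
    have hzero : support (pushforward φ f) ⊆ φ '' K := by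
      intro y hy
      by_contra hyn
      apply hy
      apply finsum_mem_of_eqOn_zero
      intro x hx
      by_contra hne
      exact hyn ⟨x, subset_tsupport f hne, hx⟩
    exact closure_minimal hzero (hKc.image hcont).isClosed
  refine ⟨fin, ?_, hsubK,
    (hKc.image hcont).of_isClosed_subset (isClosed_tsupport _) hsubK⟩
  -- continuity
  rw [continuous_iff_continuousAt]
  intro y₀
  set S' := (fin y₀).toFinset with hS'
  obtain ⟨U, hU, hUd⟩ := (fin y₀).t2_separation
  set V : X → Set X := fun x => U x ∩ (e x).source with hV
  have hVopen : ∀ x, IsOpen (V x) := fun x => (hU x).2.inter (e x).open_source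
  have hVmem : ∀ x, x ∈ V x := fun x => ⟨(hU x).1, hes x⟩
  have hVd : (φ ⁻¹' {y₀} ∩ K).PairwiseDisjoint V :=
    hUd.mono_on fun x _ => inter_subset_left
  -- the neighbourhood W
  set C : Set X := K \ ⋃ x ∈ S', V x with hC
  have hCc : IsCompact C := hKc.diff (isOpen_biUnion fun x _ => hVopen x)
  set W : Set Y := (⋂ x ∈ S', φ '' V x) ∩ (φ '' C)ᶜ with hW
  have hWopen : IsOpen W :=
    (isOpen_biInter_finset fun x _ => hopen _ (hVopen x)).inter
      (hCc.image hcont).isClosed.isOpen_compl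
  have hy₀W : y₀ ∈ W := by
    constructor
    · refine mem_iInter₂.2 fun x hx => ?_
      have hxf : φ x = y₀ := ((fin y₀).mem_toFinset.1 hx).1
      exact ⟨x, hVmem x, hxf⟩
    · rintro ⟨z, ⟨hzK, hz⟩, hφz⟩
      have hzS : z ∈ S' := (fin y₀).mem_toFinset.2 ⟨hφz, hzK⟩
      exact hz (mem_biUnion hzS (hVmem z))
  -- the local formula
  have hyT : ∀ y ∈ W, ∀ x ∈ S', y ∈ (e x).target ∧ (e x).symm y ∈ V x := by
    intro y hy x hx
    obtain ⟨z, hzV, hzy⟩ := mem_iInter₂.1 hy.1 x hx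
    have hze : (e x) z = y := by rw [← hfe x]; exact hzy
    have hzsrc : z ∈ (e x).source := hzV.2
    have h1 : y ∈ (e x).target := hze ▸ (e x).map_source hzsrc
    have h2 : (e x).symm y = z := by rw [← hze, (e x).left_inv hzsrc]
    exact ⟨h1, h2 ▸ hzV⟩
  have hEq : EqOn (pushforward φ f) (fun y => ∑ x ∈ S', f ((e x).symm y)) W := by
    intro y hy
    have hσfib : ∀ x ∈ (S' : Set X), (e x).symm y ∈ φ ⁻¹' {y} := by
      intro x hx
      have h := hyT y hy x hx
      have : φ ((e x).symm y) = (e x) ((e x).symm y) := by rw [hfe x]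
      simp only [mem_preimage, mem_singleton_iff, this, (e x).right_inv h.1]
    have hinj : InjOn (fun x => (e x).symm y) (S' : Set X) := by
      intro a ha b hb hab
      by_contra hne
      have haS : a ∈ φ ⁻¹' {y₀} ∩ K := (fin y₀).mem_toFinset.1 ha
      have hbS : b ∈ φ ⁻¹' {y₀} ∩ K := (fin y₀).mem_toFinset.1 hb
      have hd := hVd haS hbS hne
      have h1 : (e a).symm y ∈ V a := (hyT y hy a ha).2
      have h2 : (e b).symm y ∈ V b := (hyT y hy b hb).2
      have hab' : (e a).symm y = (e b).symm y := hab
      exact (hd.le_bot ⟨h1, hab'.symm ▸ h2⟩ : _)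
    have hset : φ ⁻¹' {y} ∩ support f =
        ((fun x => (e x).symm y) '' (S' : Set X)) ∩ support f := by
      apply Set.Subset.antisymm
      · rintro z ⟨hz1, hz2⟩
        have hzK : z ∈ K := subset_tsupport f hz2
        have hzC : z ∉ C := by
          intro hzC
          exact hy.2 ⟨z, hzC, hz1⟩
        have : z ∈ ⋃ x ∈ S', V x := by
          by_contra h
          exact hzC ⟨hzK, h⟩
        obtain ⟨x, hx, hzV⟩ := mem_iUnion₂.1 this
        have hze : (e x) z = y := by rw [← hfe x]; exact hz1
        have : (e x).symm y = z := by rw [← hze, (e x).left_inv hzV.2]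
        exact ⟨⟨x, hx, this⟩, hz2⟩
      · rintro z ⟨⟨x, hx, rfl⟩, hz2⟩
        exact ⟨hσfib x hx, hz2⟩
    calc pushforward φ f y = ∑ᶠ x ∈ φ ⁻¹' {y}, f x := rfl
      _ = ∑ᶠ x ∈ (fun x => (e x).symm y) '' (S' : Set X), f x :=
          finsum_mem_inter_support_eq f _ _ hset
      _ = ∑ᶠ x ∈ (S' : Set X), f ((e x).symm y) := finsum_mem_image hinj
      _ = ∑ x ∈ S', f ((e x).symm y) := finsum_mem_coe_finset _ _
  have hgc : ContinuousAt (fun y => ∑ x ∈ S', f ((e x).symm y)) y₀ := by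
    apply tendsto_finset_sum
    intro x hx
    have hyt : y₀ ∈ (e x).target := (hyT y₀ hy₀W x hx).1
    exact (hf.continuousAt.comp ((e x).continuousAt_symm hyt) : _)
  exact hgc.congr (Filter.eventuallyEq_of_mem (hWopen.mem_nhds hy₀W) hEq).symm
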